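/- arXiv:1301.6321 — 2 statements merged into one kernel-verified Lean document; each statement's English description precedes it below -/
import Mathlib

section
/- Assume hypothesis (EC). Let r ∈ (0,r_T) and M ≥ M(0,r). Then V_{M,r} ≠ ∅; for every u ∈ V_{M,r} the supremum defining τ_{M,r}(u) is attained, i.e., y(T;χ_{(τ_{M,r}(u),T)}u,y₀) ∈ B(z_d,r); the second type optimal time problem (TP)^{M,r} has an optimal control; and τ(M,r) < T. -/
open MeasureTheory Set Filter Topology

noncomputable section

variable {H : Type*} [NormedAddCommGroup H] [InnerProductSpace ℂ H] [CompleteSpace H]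
  [SecondCountableTopology H]

/-- `U` is a strongly continuous one-parameter group of unitary operators on `H`,
abstracting the Schrödinger group `e^{-iΔt}`. -/
def IsUnitaryGroup (U : ℝ → H →L[ℂ] H) : Prop :=
  U 0 = ContinuousLinearMap.id ℂ H ∧
  (∀ s t : ℝ, U (s + t) = (U s).comp (U t)) ∧
  (∀ (t : ℝ) (x : H), ‖U t x‖ = ‖x‖) ∧
  ∀ x : H, Continuous fun t : ℝ => U t x

/-- `B` is a nonzero orthogonal projection on `H`, abstracting multiplication by `χ_ω`. -/
def IsOrthProj (B : H →L[ℂ] H) : Prop :=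
  B ≠ 0 ∧ B.comp B = B ∧ ∀ x y : H, (inner ℂ (B x) y : ℂ) = inner ℂ x (B y)

/-- Membership in `L∞((a,b);H)`. -/
def MemLinfty (u : ℝ → H) (a b : ℝ) : Prop :=
  AEStronglyMeasurable u (volume : Measure ℝ) ∧
    ∃ c : ℝ, ∀ᵐ t : ℝ ∂volume, t ∈ Ioo a b → ‖u t‖ ≤ c

/-- Membership in `L∞((0,∞);H)`. -/
def MemLinftyInf (u : ℝ → H) : Prop :=
  AEStronglyMeasurable u (volume : Measure ℝ) ∧
    ∃ c : ℝ, ∀ᵐ t : ℝ ∂volume, t ∈ Ioi (0 : ℝ) → ‖u t‖ ≤ c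

/-- The `L∞((a,b);H)` norm of `u`. -/
def supNorm (u : ℝ → H) (a b : ℝ) : ℝ :=
  sInf {c : ℝ | 0 ≤ c ∧ ∀ᵐ t : ℝ ∂volume, t ∈ Ioo a b → ‖u t‖ ≤ c}

/-- `stateT U B T τ u y₀ = y(T; χ_{(τ,T)}u, y₀)`, the mild solution at time `T` of the
controlled Schrödinger equation with initial state `y₀`, the control acting on `(τ,T)`:
`y(T) = U(T)y₀ + ∫_τ^T U(T-s) B u(s) ds`.  The free state at time `t` starting from `y₀`
with control `u` active from time `0` is `stateT U B t 0 u y₀`. -/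
def stateT (U : ℝ → H →L[ℂ] H) (B : H →L[ℂ] H) (T τ : ℝ) (u : ℝ → H) (y₀ : H) : H :=
  U T y₀ + ∫ s in Ioo τ T, U (T - s) (B (u s))

/-- Hypothesis (EC): `L∞`-exact controllability with cost. -/
def EC (U : ℝ → H →L[ℂ] H) (B : H →L[ℂ] H) : Prop :=
  ∀ τ : ℝ, 0 < τ → ∃ C : ℝ, 0 < C ∧ ∀ y₀ z : H, ∃ u : ℝ → H,
    AEStronglyMeasurable u (volume : Measure ℝ) ∧
    (∀ᵐ t : ℝ ∂volume, t ∈ Ioo 0 τ → ‖u t‖ ≤ C * ‖z - U τ y₀‖) ∧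
    stateT U B τ 0 u y₀ = z

/-- Hypothesis (UC): unique continuation. -/
def UC (U : ℝ → H →L[ℂ] H) (B : H →L[ℂ] H) : Prop :=
  ∀ η : H, η ≠ 0 → volume {t : ℝ | B (U t η) = 0} = 0

/-- The admissible set `U_M` of the minimal time problem `(TOCP)_M`. -/
def UMset (U : ℝ → H →L[ℂ] H) (B : H →L[ℂ] H) (y₀ : H) (M : ℝ) : Set (ℝ → H) :=
  {u | MemLinftyInf u ∧ (∀ᵐ t : ℝ ∂volume, t ∈ Ioi (0 : ℝ) → ‖u t‖ ≤ M) ∧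
    ∃ s : ℝ, 0 < s ∧ stateT U B s 0 u y₀ = 0}

/-- The minimal time `T_M` of `(TOCP)_M`. -/
def Tmin (U : ℝ → H →L[ℂ] H) (B : H →L[ℂ] H) (y₀ : H) (M : ℝ) : ℝ :=
  sInf {s : ℝ | 0 < s ∧ ∃ u ∈ UMset U B y₀ M, stateT U B s 0 u y₀ = 0}

/-- The admissible set `V_T` of the minimal norm problem `(NOCP)_T`. -/
def VTset (U : ℝ → H →L[ℂ] H) (B : H →L[ℂ] H) (y₀ : H) (T : ℝ) : Set (ℝ → H) :=
  {v | MemLinfty v 0 T ∧ stateT U B T 0 v y₀ = 0}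

/-- The minimal norm `M_T` of `(NOCP)_T`. -/
def Mmin (U : ℝ → H →L[ℂ] H) (B : H →L[ℂ] H) (y₀ : H) (T : ℝ) : ℝ :=
  sInf ((fun v : ℝ → H => supNorm v 0 T) '' VTset U B y₀ T)

/-- Hypothesis (BB): bang-bang property of the minimal time problems. -/
def BB (U : ℝ → H →L[ℂ] H) (B : H →L[ℂ] H) : Prop :=
  ∀ y₀ : H, y₀ ≠ 0 → ∀ M : ℝ, 0 < M → ∀ u ∈ UMset U B y₀ M,
    stateT U B (Tmin U B y₀ M) 0 u y₀ = 0 →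
    ∀ᵐ t : ℝ ∂volume, t ∈ Ioo 0 (Tmin U B y₀ M) → ‖u t‖ = M

/-- Hypothesis (ET): existence of optimal controls for the minimal time problems. -/
def ET (U : ℝ → H →L[ℂ] H) (B : H →L[ℂ] H) : Prop :=
  ∀ y₀ : H, y₀ ≠ 0 → ∀ M : ℝ, 0 < M →
    ∃ u ∈ UMset U B y₀ M, stateT U B (Tmin U B y₀ M) 0 u y₀ = 0

/-- The admissible set `U_{M,τ}`. -/
def UadmSet (M τ T : ℝ) : Set (ℝ → H) :=
  {u | MemLinfty u 0 T ∧ ∀ᵐ t : ℝ ∂volume, t ∈ Ioo τ T → ‖u t‖ ≤ M}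

/-- The optimal distance `r(M,τ)` of the optimal target problem `(OP)^{M,τ}`. -/
def rOP (U : ℝ → H →L[ℂ] H) (B : H →L[ℂ] H) (y₀ z_d : H) (T M τ : ℝ) : ℝ :=
  sInf ((fun u : ℝ → H => ‖stateT U B T τ u y₀ - z_d‖) '' UadmSet M τ T)

/-- `u` is an optimal control to `(OP)^{M,τ}`. -/
def IsOptOP (U : ℝ → H →L[ℂ] H) (B : H →L[ℂ] H) (y₀ z_d : H) (T M τ : ℝ) (u : ℝ → H) :
    Prop :=
  u ∈ UadmSet M τ T ∧ ‖stateT U B T τ u y₀ - z_d‖ = rOP U B y₀ z_d T M τ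

/-- `M^τ`, the minimal norm for exact steering to the target `z_d`. -/
def Mtau (U : ℝ → H →L[ℂ] H) (B : H →L[ℂ] H) (y₀ z_d : H) (T τ : ℝ) : ℝ :=
  sInf ((fun u : ℝ → H => supNorm u τ T) ''
    {u : ℝ → H | MemLinfty u 0 T ∧ stateT U B T τ u y₀ = z_d})

/-- The admissible set `W_{τ,r}` of the optimal norm problem `(NP)^{τ,r}`. -/
def WadmSet (U : ℝ → H →L[ℂ] H) (B : H →L[ℂ] H) (y₀ z_d : H) (T τ r : ℝ) :
    Set (ℝ → H) :=
  {u | MemLinfty u 0 T ∧ ‖stateT U B T τ u y₀ - z_d‖ ≤ r}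

/-- The optimal norm `M(τ,r)` of `(NP)^{τ,r}`. -/
def MNP (U : ℝ → H →L[ℂ] H) (B : H →L[ℂ] H) (y₀ z_d : H) (T τ r : ℝ) : ℝ :=
  sInf ((fun u : ℝ → H => supNorm u τ T) '' WadmSet U B y₀ z_d T τ r)

/-- `u` is an optimal control to `(NP)^{τ,r}`. -/
def IsOptNP (U : ℝ → H →L[ℂ] H) (B : H →L[ℂ] H) (y₀ z_d : H) (T τ r : ℝ) (u : ℝ → H) :
    Prop :=
  u ∈ WadmSet U B y₀ z_d T τ r ∧ supNorm u τ T = MNP U B y₀ z_d T τ r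

/-- The admissible set `V_{M,r}` of the second type optimal time problem `(TP)^{M,r}`. -/
def VadmSet (U : ℝ → H →L[ℂ] H) (B : H →L[ℂ] H) (y₀ z_d : H) (T M r : ℝ) :
    Set (ℝ → H) :=
  {u | ∃ τ : ℝ, τ ∈ Ico (0 : ℝ) T ∧ u ∈ UadmSet M τ T ∧
    ‖stateT U B T τ u y₀ - z_d‖ ≤ r}

/-- `τ_{M,r}(u)`. -/
def tauOf (U : ℝ → H →L[ℂ] H) (B : H →L[ℂ] H) (y₀ z_d : H) (T r : ℝ) (u : ℝ → H) : ℝ :=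
  sSup {τ : ℝ | τ ∈ Ico (0 : ℝ) T ∧ ‖stateT U B T τ u y₀ - z_d‖ ≤ r}

/-- The optimal time `τ(M,r)` of `(TP)^{M,r}`. -/
def tauTP (U : ℝ → H →L[ℂ] H) (B : H →L[ℂ] H) (y₀ z_d : H) (T M r : ℝ) : ℝ :=
  sSup (tauOf U B y₀ z_d T r '' VadmSet U B y₀ z_d T M r)

/-- `u` is an optimal control to `(TP)^{M,r}`. -/
def IsOptTP (U : ℝ → H →L[ℂ] H) (B : H →L[ℂ] H) (y₀ z_d : H) (T M r : ℝ) (u : ℝ → H) :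
    Prop :=
  u ∈ VadmSet U B y₀ z_d T M r ∧
    ‖stateT U B T (tauTP U B y₀ z_d T M r) u y₀ - z_d‖ ≤ r

/-- The adjoint state `φ*(t) = U(t-T)(z_d - y(T; χ_{(τ,T)}u, y₀))`. -/
def adjState (U : ℝ → H →L[ℂ] H) (B : H →L[ℂ] H) (y₀ z_d : H) (T τ : ℝ) (u : ℝ → H)
    (t : ℝ) : H :=
  U (t - T) (z_d - stateT U B T τ u y₀)

section Aux

variable {H : Type*} [NormedAddCommGroup H] [InnerProductSpace ℂ H] [CompleteSpace H]
  [SecondCountableTopology H]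

local notation "⟪" x ", " y "⟫" => @inner ℂ _ _ x y

variable {U : ℝ → H →L[ℂ] H} {B : H →L[ℂ] H}

lemma ug_norm (hU : IsUnitaryGroup U) (t : ℝ) (x : H) : ‖U t x‖ = ‖x‖ := hU.2.2.1 t x

lemma ug_cont (hU : IsUnitaryGroup U) : Continuous fun p : ℝ × H => U p.1 p.2 := by
  rw [continuous_iff_continuousAt]
  rintro ⟨t₀, x₀⟩
  have hrw : ∀ p : ℝ × H, U p.1 p.2 = U p.1 (p.2 - x₀) + U p.1 x₀ := fun p => by
    rw [← map_add, sub_add_cancel]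
  simp only [ContinuousAt, hrw]
  have h1 : Tendsto (fun p : ℝ × H => U p.1 (p.2 - x₀)) (𝓝 (t₀, x₀)) (𝓝 0) := by
    refine squeeze_zero_norm (fun p : ℝ × H => (ug_norm hU p.1 (p.2 - x₀)).le) ?_
    have : Tendsto (fun p : ℝ × H => ‖p.2 - x₀‖) (𝓝 (t₀, x₀)) (𝓝 ‖x₀ - x₀‖) :=
      ((continuous_snd.sub continuous_const).norm).continuousAt
    simpa using this
  have h2 : Tendsto (fun p : ℝ × H => U p.1 x₀) (𝓝 (t₀, x₀)) (𝓝 (U t₀ x₀)) :=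
    ((hU.2.2.2 x₀).comp continuous_fst).continuousAt
  simpa using h1.add h2

lemma ug_inv (hU : IsUnitaryGroup U) (t : ℝ) (x : H) : U t (U (-t) x) = x := by
  have h := congrArg (fun L : H →L[ℂ] H => L x) (hU.2.1 t (-t))
  simp only [ContinuousLinearMap.comp_apply] at h
  rw [← h, add_neg_cancel, hU.1]
  rfl

lemma ug_inner_left (hU : IsUnitaryGroup U) (t : ℝ) (x y : H) :
    ⟪U t x, y⟫ = ⟪x, U (-t) y⟫ := by
  have h := LinearIsometry.inner_map_map
    (⟨(U t).toLinearMap, hU.2.2.1 t⟩ : H →ₗᵢ[ℂ] H) x (U (-t) y)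
  simpa [ug_inv hU t y] using h

lemma ug_inner_right (hU : IsUnitaryGroup U) (t : ℝ) (x y : H) :
    ⟪x, U t y⟫ = ⟪U (-t) x, y⟫ :=
  calc ⟪x, U t y⟫ = (starRingEnd ℂ) ⟪U t y, x⟫ := (inner_conj_symm _ _).symm
    _ = (starRingEnd ℂ) ⟪y, U (-t) x⟫ := by rw [ug_inner_left hU]
    _ = ⟪U (-t) x, y⟫ := inner_conj_symm _ _

lemma F_meas (hU : IsUnitaryGroup U) {u : ℝ → H}
    (hu : AEStronglyMeasurable u (volume : Measure ℝ)) (T : ℝ) :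
    AEStronglyMeasurable (fun s => U (T - s) (B (u s))) (volume : Measure ℝ) := by
  have h1 : AEStronglyMeasurable (fun s : ℝ => ((T - s : ℝ), B (u s))) (volume : Measure ℝ) :=
    ((continuous_const.sub continuous_id).aestronglyMeasurable).prodMk
      (B.continuous.comp_aestronglyMeasurable hu)
  exact (ug_cont hU).comp_aestronglyMeasurable h1

lemma F_int (hU : IsUnitaryGroup U) {u : ℝ → H} {a b c T : ℝ}
    (hu : AEStronglyMeasurable u (volume : Measure ℝ))
    (hbd : ∀ᵐ t : ℝ ∂volume, t ∈ Ioo a b → ‖u t‖ ≤ c) :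
    IntegrableOn (fun s => U (T - s) (B (u s))) (Ioo a b) volume := by
  have hm : AEStronglyMeasurable (fun s => U (T - s) (B (u s))) (volume.restrict (Ioo a b)) :=
    (F_meas (B := B) hU hu T).restrict
  refine Integrable.mono' (g := fun _ => ‖B‖ * c)
    ((integrableOn_const_iff).2 <| Or.inr <| by simp [Real.volume_Ioo]) hm ?_
  refine (ae_restrict_iff' measurableSet_Ioo).2 (hbd.mono fun t ht hmem => ?_)
  rw [ug_norm hU]
  exact (B.le_opNorm (u t)).trans (mul_le_mul_of_nonneg_left (ht hmem) (norm_nonneg _))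

lemma F_norm (hU : IsUnitaryGroup U) {u : ℝ → H} {a b c T : ℝ} (hab : a ≤ b)
    (hbd : ∀ᵐ t : ℝ ∂volume, t ∈ Ioo a b → ‖u t‖ ≤ c) :
    ‖∫ s in Ioo a b, U (T - s) (B (u s))‖ ≤ ‖B‖ * c * (b - a) := by
  have hb : ∀ᵐ t : ℝ ∂(volume.restrict (Ioo a b)), ‖U (T - t) (B (u t))‖ ≤ ‖B‖ * c := by
    refine (ae_restrict_iff' measurableSet_Ioo).2 (hbd.mono fun t ht hmem => ?_)
    rw [ug_norm hU]
    exact (B.le_opNorm (u t)).trans (mul_le_mul_of_nonneg_left (ht hmem) (norm_nonneg _))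
  have h := norm_setIntegral_le_of_norm_le_const_ae (C := ‖B‖ * c)
    (by simp [Real.volume_Ioo] : volume (Ioo a b) < ⊤) hb
  rwa [Real.volume_real_Ioo_of_le hab] at h

lemma integral_Ioo_split {f : ℝ → H} {τ₁ τ₂ T : ℝ} (h1 : τ₁ ≤ τ₂) (h2 : τ₂ ≤ T)
    (hint : IntegrableOn f (Ioo τ₁ T) volume) :
    ∫ s in Ioo τ₁ T, f s = (∫ s in Ioo τ₁ τ₂, f s) + ∫ s in Ioo τ₂ T, f s := by
  have hIoc : IntegrableOn f (Ioc τ₁ T) volume :=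
    (integrableOn_Ioc_iff_integrableOn_Ioo).2 hint
  have e1 : IntegrableOn f (Ioc τ₁ τ₂) volume := hIoc.mono_set (Set.Ioc_subset_Ioc_right h2)
  have e2 : IntegrableOn f (Ioc τ₂ T) volume := hIoc.mono_set (Set.Ioc_subset_Ioc_left h1)
  rw [← integral_Ioc_eq_integral_Ioo, ← integral_Ioc_eq_integral_Ioo,
    ← integral_Ioc_eq_integral_Ioo, ← Set.Ioc_union_Ioc_eq_Ioc h1 h2,
    setIntegral_union (Set.Ioc_disjoint_Ioc_of_le le_rfl) measurableSet_Ioc e1 e2]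

lemma stateT_diff (hU : IsUnitaryGroup U) {u : ℝ → H} {τ₁ τ₂ T c : ℝ} (y₀ : H)
    (hu : AEStronglyMeasurable u (volume : Measure ℝ))
    (h1 : τ₁ ≤ τ₂) (h2 : τ₂ ≤ T)
    (hbd : ∀ᵐ t : ℝ ∂volume, t ∈ Ioo τ₁ T → ‖u t‖ ≤ c) :
    stateT U B T τ₁ u y₀ - stateT U B T τ₂ u y₀ = ∫ s in Ioo τ₁ τ₂, U (T - s) (B (u s)) := by
  unfold stateT
  rw [integral_Ioo_split h1 h2 (F_int hU hu hbd)]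
  abel

lemma stateT_self (T : ℝ) (u : ℝ → H) (y₀ : H) : stateT U B T T u y₀ = U T y₀ := by
  unfold stateT
  rw [Set.Ioo_self, Measure.restrict_empty, integral_zero_measure, add_zero]

lemma supNorm_nonneg (u : ℝ → H) (a b : ℝ) : 0 ≤ supNorm u a b :=
  Real.sInf_nonneg fun _ hc => hc.1

lemma ae_le_supNorm {u : ℝ → H} {a b : ℝ} (h : MemLinfty u a b) :
    ∀ᵐ t : ℝ ∂volume, t ∈ Ioo a b → ‖u t‖ ≤ supNorm u a b := by
  obtain ⟨hm, c, hc⟩ := h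
  have hne : {c : ℝ | 0 ≤ c ∧ ∀ᵐ t : ℝ ∂volume, t ∈ Ioo a b → ‖u t‖ ≤ c}.Nonempty :=
    ⟨max c 0, le_max_right _ _, hc.mono fun t h ht => (h ht).trans (le_max_left _ _)⟩
  have key : ∀ n : ℕ, ∀ᵐ t : ℝ ∂volume, t ∈ Ioo a b → ‖u t‖ ≤ supNorm u a b + 1/(n+1) := by
    intro n
    obtain ⟨d, hd, hlt⟩ := Real.lt_sInf_add_pos hne (by positivity : (0:ℝ) < 1/(n+1))
    exact hd.2.mono fun t h ht => (h ht).trans hlt.le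
  refine (ae_all_iff.2 key).mono fun t h ht => le_of_forall_pos_le_add fun ε hε => ?_
  obtain ⟨n, hn⟩ := exists_nat_one_div_lt hε
  exact (h n ht).trans (by linarith)

lemma key_limit (hU : IsUnitaryGroup U) (hB : IsOrthProj B)
    {T a : ℝ} (ha : a < T) (y₀ z_d : H) {M r : ℝ} (hM0 : 0 ≤ M) (hr0 : 0 ≤ r)
    (u : ℕ → ℝ → H) (hmeas : ∀ n, AEStronglyMeasurable (u n) (volume : Measure ℝ))
    (Mn : ℕ → ℝ) (hMn : Tendsto Mn atTop (𝓝 M))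
    (hbd : ∀ n, ∀ᵐ t : ℝ ∂volume, t ∈ Ioo a T → ‖u n t‖ ≤ Mn n)
    (rn : ℕ → ℝ) (hrn : Tendsto rn atTop (𝓝 r))
    (hst : ∀ n, ‖stateT U B T a (u n) y₀ - z_d‖ ≤ rn n) :
    ∃ v : ℝ → H, AEStronglyMeasurable v (volume : Measure ℝ) ∧
      (∀ t, t ∉ Ioo a T → v t = 0) ∧
      (∀ᵐ t : ℝ ∂volume, t ∈ Ioo a T → ‖v t‖ ≤ M) ∧
      ‖stateT U B T a v y₀ - z_d‖ ≤ r := by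
  classical
  set μ : Measure ℝ := volume.restrict (Ioo a T) with hμ
  haveI : IsFiniteMeasure μ := ⟨by
    rw [Measure.restrict_apply_univ]; simp [Real.volume_Ioo]⟩
  -- uniform bound on Mn
  obtain ⟨K0, hK0⟩ := hMn.bddAbove_range
  set K : ℝ := max K0 0 with hK
  have hKn : ∀ n, Mn n ≤ K := fun n => (hK0 (Set.mem_range_self n)).trans (le_max_left _ _)
  have hK0' : 0 ≤ K := le_max_right _ _
  -- Lp elements
  have hup : ∀ n, MemLp (u n) 2 μ := fun n =>
    MemLp.of_bound ((hmeas n).restrict) (Mn n) ((ae_restrict_iff' measurableSet_Ioo).2 (hbd n))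
  set v : ℕ → Lp H 2 μ := fun n => (hup n).toLp (u n) with hv
  have hvcoe : ∀ n, (v n : ℝ → H) =ᵐ[μ] u n := fun n => (hup n).coeFn_toLp
  have hvbd : ∀ n, ∀ᵐ t ∂μ, ‖(v n : ℝ → H) t‖ ≤ K := by
    intro n
    filter_upwards [(ae_restrict_iff' measurableSet_Ioo).2 (hbd n), hvcoe n] with t h1 h2
    rw [h2]
    exact h1.trans (hKn n)
  set R : ℝ := (measureUnivNNReal μ : ℝ) ^ (2 : ENNReal).toReal⁻¹ * K with hR
  have hvR : ∀ n, ‖v n‖ ≤ R := fun n => Lp.norm_le_of_ae_bound hK0' (hvbd n)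
  -- ultrafilter weak limit
  set 𝒰 : Ultrafilter ℕ := Ultrafilter.of atTop with h𝒰def
  have h𝒰 : (𝒰 : Filter ℕ) ≤ atTop := Ultrafilter.of_le _
  have hex : ∀ w : Lp H 2 μ, ∃ c : ℂ, Tendsto (fun n => ⟪v n, w⟫) 𝒰 (𝓝 c) := by
    intro w
    have hmem : ∀ n, ⟪v n, w⟫ ∈ Metric.closedBall (0 : ℂ) (R * ‖w‖) := fun n => by
      rw [Metric.mem_closedBall, dist_zero_right]
      exact (norm_inner_le_norm _ _).trans
        (mul_le_mul_of_nonneg_right (hvR n) (norm_nonneg _))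
    obtain ⟨c, _, hc⟩ := (isCompact_closedBall (0 : ℂ) (R * ‖w‖)).ultrafilter_le_nhds
      (𝒰.map fun n => ⟪v n, w⟫)
      (by
        rw [Ultrafilter.coe_map, Filter.le_principal_iff, Filter.mem_map]
        exact Filter.univ_mem' hmem)
    exact ⟨c, hc⟩
  choose L hL using hex
  have hadd : ∀ w w', L (w + w') = L w + L w' := fun w w' =>
    tendsto_nhds_unique (hL (w + w'))
      (by simpa only [inner_add_right] using ((hL w).add (hL w')))
  have hsmul : ∀ (c : ℂ) w, L (c • w) = c • L w := fun c w =>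
    tendsto_nhds_unique (hL (c • w))
      (by simpa only [inner_smul_right, smul_eq_mul] using ((hL w).const_mul c))
  have hbound : ∀ w, ‖L w‖ ≤ R * ‖w‖ := fun w =>
    le_of_tendsto ((hL w).norm) (Filter.Eventually.of_forall fun n =>
      (norm_inner_le_norm _ _).trans (mul_le_mul_of_nonneg_right (hvR n) (norm_nonneg _)))
  set φ : Lp H 2 μ →L[ℂ] ℂ :=
    LinearMap.mkContinuous ⟨⟨L, hadd⟩, hsmul⟩ R hbound with hφdef
  set vstar : Lp H 2 μ := (InnerProductSpace.toDual ℂ (Lp H 2 μ)).symm φ with hvstar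
  have hvs : ∀ w, ⟪vstar, w⟫ = L w := fun w => InnerProductSpace.toDual_symm_apply
  have hconj : ∀ w, Tendsto (fun n => ⟪w, v n⟫) 𝒰 (𝓝 ⟪w, vstar⟫) := by
    intro w
    have h1 : Tendsto (fun n => ⟪v n, w⟫) 𝒰 (𝓝 ⟪vstar, w⟫) := by rw [hvs]; exact hL w
    have h2 := (Complex.continuous_conj.tendsto _).comp h1
    simpa only [Function.comp_def, inner_conj_symm] using h2
  -- pointwise bound on vstar
  obtain ⟨D, hDc, hDd⟩ := TopologicalSpace.exists_countable_dense H
  have hint_v : Integrable (vstar : ℝ → H) μ := (Lp.memLp vstar).integrable one_le_two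
  have hball : ∀ d ∈ D, ∀ᵐ x ∂μ, RCLike.re ⟪d, (vstar : ℝ → H) x⟫ ≤ ‖d‖ * M := by
    intro d _
    refine ae_le_of_forall_setIntegral_le ((hint_v.const_inner d).re)
      (integrable_const _) fun A hA hAfin => ?_
    set g : Lp H 2 μ := indicatorConstLp 2 hA hAfin.ne d with hg
    have h1 : ∫ x in A, RCLike.re ⟪d, (vstar : ℝ → H) x⟫ ∂μ = RCLike.re (⟪g, vstar⟫ : ℂ) := by
      rw [L2.inner_indicatorConstLp_eq_setIntegral_inner,
        integral_re ((hint_v.const_inner d).restrict)]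
    have h2 : ∀ n, RCLike.re (⟪g, v n⟫ : ℂ) ≤ ‖d‖ * Mn n * (μ A).toReal := by
      intro n
      have hint_n : Integrable ((v n : ℝ → H)) μ := (Lp.memLp (v n)).integrable one_le_two
      rw [L2.inner_indicatorConstLp_eq_setIntegral_inner,
        ← integral_re ((hint_n.const_inner d).restrict)]
      have hb : ∀ᵐ x ∂(μ.restrict A), RCLike.re ⟪d, (v n : ℝ → H) x⟫ ≤ ‖d‖ * Mn n := by
        refine ae_restrict_of_ae ?_
        filter_upwards [(ae_restrict_iff' measurableSet_Ioo).2 (hbd n), hvcoe n] with x h1 h2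
        calc RCLike.re ⟪d, (v n : ℝ → H) x⟫ ≤ ‖(⟪d, (v n : ℝ → H) x⟫ : ℂ)‖ :=
              RCLike.re_le_norm _
          _ ≤ ‖d‖ * ‖(v n : ℝ → H) x‖ := norm_inner_le_norm _ _
          _ ≤ ‖d‖ * Mn n := by
              rw [h2]
              exact mul_le_mul_of_nonneg_left h1 (norm_nonneg _)
      calc ∫ x in A, RCLike.re ⟪d, (v n : ℝ → H) x⟫ ∂μ
          ≤ ∫ _ in A, ‖d‖ * Mn n ∂μ :=
            integral_mono_ae ((hint_n.const_inner d).re.restrict) (integrable_const _) hb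
        _ = (μ A).toReal * (‖d‖ * Mn n) := by rw [setIntegral_const]; simp [smul_eq_mul, measureReal_def]
        _ = ‖d‖ * Mn n * (μ A).toReal := by ring
    have h3 : RCLike.re (⟪g, vstar⟫ : ℂ) ≤ ‖d‖ * M * (μ A).toReal := by
      have ht : Tendsto (fun n => RCLike.re (⟪g, v n⟫ : ℂ)) 𝒰 (𝓝 (RCLike.re (⟪g, vstar⟫ : ℂ))) :=
        (RCLike.continuous_re.tendsto _).comp (hconj g)
      have ht2 : Tendsto (fun n => ‖d‖ * Mn n * (μ A).toReal) 𝒰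
          (𝓝 (‖d‖ * M * (μ A).toReal)) :=
        (((hMn.mono_left h𝒰).const_mul ‖d‖).mul_const _)
      exact le_of_tendsto_of_tendsto' ht ht2 h2
    rw [h1, setIntegral_const, smul_eq_mul]
    calc RCLike.re (⟪g, vstar⟫ : ℂ) ≤ ‖d‖ * M * (μ A).toReal := h3
      _ = (μ A).toReal * (‖d‖ * M) := by ring
  have hbdd : ∀ᵐ x ∂μ, ‖(vstar : ℝ → H) x‖ ≤ M := by
    refine ((ae_ball_iff hDc).2 hball).mono fun x hx => ?_
    have hclosed : IsClosed {y : H | RCLike.re ⟪y, (vstar : ℝ → H) x⟫ ≤ ‖y‖ * M} :=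
      isClosed_le (RCLike.continuous_re.comp (Continuous.inner continuous_id continuous_const))
        (continuous_norm.mul continuous_const)
    have hsub : D ⊆ {y : H | RCLike.re ⟪y, (vstar : ℝ → H) x⟫ ≤ ‖y‖ * M} := fun d hd => hx d hd
    have huniv : (Set.univ : Set H) ⊆ {y : H | RCLike.re ⟪y, (vstar : ℝ → H) x⟫ ≤ ‖y‖ * M} := by
      rw [← hDd.closure_eq]
      exact hclosed.closure_subset_iff.2 hsub
    have hself := huniv (Set.mem_univ ((vstar : ℝ → H) x))
    simp only [Set.mem_setOf_eq, inner_self_eq_norm_mul_norm] at hself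
    nlinarith [norm_nonneg ((vstar : ℝ → H) x)]
  -- the limit control
  set w : ℝ → H := (Ioo a T).indicator (vstar : ℝ → H) with hw
  have hwmeas : AEStronglyMeasurable w (volume : Measure ℝ) :=
    ((Lp.stronglyMeasurable vstar).indicator measurableSet_Ioo).aestronglyMeasurable
  have hwzero : ∀ t, t ∉ Ioo a T → w t = 0 := fun t ht => Set.indicator_of_notMem ht _
  have hweq : ∀ᵐ t ∂μ, w t = (vstar : ℝ → H) t :=
    (ae_restrict_mem measurableSet_Ioo).mono fun t ht => Set.indicator_of_mem ht _
  have hwbd : ∀ᵐ t : ℝ ∂volume, t ∈ Ioo a T → ‖w t‖ ≤ M := by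
    refine (ae_restrict_iff' measurableSet_Ioo).1 ((hbdd.and hweq).mono fun t h => ?_)
    rw [h.2]; exact h.1
  refine ⟨w, hwmeas, hwzero, hwbd, ?_⟩
  -- state identity through inner products
  have hBsa := hB.2.2
  set c₀ : H := U T y₀ - z_d with hc₀
  have gcont : ∀ wH : H, Continuous fun s : ℝ => B (U (s - T) wH) := fun wH =>
    B.continuous.comp ((ug_cont hU).comp
      ((continuous_id.sub continuous_const).prodMk continuous_const))
  have gmem : ∀ wH : H, MemLp (fun s : ℝ => B (U (s - T) wH)) 2 μ := fun wH =>
    MemLp.of_bound ((gcont wH).aestronglyMeasurable.restrict) (‖B‖ * ‖wH‖)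
      (Filter.Eventually.of_forall fun s =>
        (B.le_opNorm _).trans (by rw [ug_norm hU]))
  set G : H → Lp H 2 μ := fun wH => (gmem wH).toLp _ with hG
  have hGcoe : ∀ wH, (G wH : ℝ → H) =ᵐ[μ] fun s => B (U (s - T) wH) := fun wH =>
    (gmem wH).coeFn_toLp
  have hpair : ∀ (f : ℝ → H), AEStronglyMeasurable f (volume : Measure ℝ) →
      ∀ (c : ℝ), (∀ᵐ t : ℝ ∂volume, t ∈ Ioo a T → ‖f t‖ ≤ c) →
      ∀ (fL : Lp H 2 μ), (fL : ℝ → H) =ᵐ[μ] f →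
      ∀ wH : H, ⟪wH, stateT U B T a f y₀ - z_d⟫ = ⟪wH, c₀⟫ + ⟪G wH, fL⟫ := by
    intro f hfm c hfb fL hfL wH
    have hFint : Integrable (fun s => U (T - s) (B (f s))) μ := F_int hU hfm hfb
    have e1 : stateT U B T a f y₀ - z_d = c₀ + ∫ s in Ioo a T, U (T - s) (B (f s)) := by
      unfold stateT; rw [hc₀]; abel
    rw [e1, inner_add_right]
    congr 1
    have e2 : (⟪wH, ∫ s in Ioo a T, U (T - s) (B (f s))⟫ : ℂ)
        = ∫ s, ⟪wH, U (T - s) (B (f s))⟫ ∂μ := (integral_inner hFint wH).symm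
    rw [e2, L2.inner_def]
    refine integral_congr_ae ((hfL.and (hGcoe wH)).mono fun s hs => ?_)
    have h2 : (G wH : ℝ → H) s = B (U (s - T) wH) := hs.2
    show (⟪wH, U (T - s) (B (f s))⟫ : ℂ) = ⟪(G wH : ℝ → H) s, (fL : ℝ → H) s⟫
    rw [h2, hs.1, hBsa, ug_inner_right hU, neg_sub]
  -- weak convergence of the states
  set xstar : H := stateT U B T a w y₀ - z_d with hxstar
  have hwst : stateT U B T a w y₀ = stateT U B T a (vstar : ℝ → H) y₀ := by
    unfold stateT
    congr 1
    refine integral_congr_ae (hweq.mono fun t ht => ?_)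
    show U (T - t) (B (w t)) = U (T - t) (B ((vstar : ℝ → H) t))
    rw [ht]
  have hxid : (⟪xstar, xstar⟫ : ℂ) = ⟪xstar, c₀⟫ + ⟪G xstar, vstar⟫ := by
    have hvsm : AEStronglyMeasurable (vstar : ℝ → H) (volume : Measure ℝ) :=
      (Lp.stronglyMeasurable vstar).aestronglyMeasurable
    have hvb : ∀ᵐ t : ℝ ∂volume, t ∈ Ioo a T → ‖(vstar : ℝ → H) t‖ ≤ M :=
      (ae_restrict_iff' measurableSet_Ioo).1 hbdd
    have e : xstar = stateT U B T a (vstar : ℝ → H) y₀ - z_d := by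
      rw [hxstar, hwst]
    nth_rewrite 2 [e]
    exact hpair (vstar : ℝ → H) hvsm M hvb vstar (Filter.EventuallyEq.refl _ _) xstar
  have hxn : ∀ n, (⟪xstar, stateT U B T a (u n) y₀ - z_d⟫ : ℂ)
      = ⟪xstar, c₀⟫ + ⟪G xstar, v n⟫ := fun n =>
    hpair (u n) (hmeas n) (Mn n) (hbd n) (v n) (hvcoe n) xstar
  have htend : Tendsto (fun n => (⟪xstar, stateT U B T a (u n) y₀ - z_d⟫ : ℂ)) 𝒰
      (𝓝 (⟪xstar, xstar⟫ : ℂ)) := by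
    rw [hxid]
    simp only [hxn]
    exact tendsto_const_nhds.add (hconj (G xstar))
  have hre : Tendsto (fun n => RCLike.re (⟪xstar, stateT U B T a (u n) y₀ - z_d⟫ : ℂ)) 𝒰
      (𝓝 (RCLike.re (⟪xstar, xstar⟫ : ℂ))) := (RCLike.continuous_re.tendsto _).comp htend
  have hub : ∀ n, RCLike.re (⟪xstar, stateT U B T a (u n) y₀ - z_d⟫ : ℂ) ≤ ‖xstar‖ * rn n := by
    intro n
    calc RCLike.re (⟪xstar, stateT U B T a (u n) y₀ - z_d⟫ : ℂ)
        ≤ ‖(⟪xstar, stateT U B T a (u n) y₀ - z_d⟫ : ℂ)‖ := RCLike.re_le_norm _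
      _ ≤ ‖xstar‖ * ‖stateT U B T a (u n) y₀ - z_d‖ := norm_inner_le_norm _ _
      _ ≤ ‖xstar‖ * rn n := mul_le_mul_of_nonneg_left (hst n) (norm_nonneg _)
  have hub2 : Tendsto (fun n => ‖xstar‖ * rn n) 𝒰 (𝓝 (‖xstar‖ * r)) :=
    (hrn.mono_left h𝒰).const_mul _
  have hfin : RCLike.re (⟪xstar, xstar⟫ : ℂ) ≤ ‖xstar‖ * r :=
    le_of_tendsto_of_tendsto' hre hub2 hub
  rw [inner_self_eq_norm_mul_norm] at hfin
  have hnn : (0:ℝ) ≤ ‖xstar‖ := norm_nonneg xstar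
  have : ‖xstar‖ ≤ r := by
    rcases hnn.eq_or_lt with h0 | h0
    · rw [← h0]; exact hr0
    · exact le_of_mul_le_mul_left hfin h0
  rwa [hxstar] at this

lemma tau_attained (hU : IsUnitaryGroup U) {T : ℝ} {y₀ z_d : H} {M r : ℝ}
    (hrT : r < ‖U T y₀ - z_d‖) {u : ℝ → H} (hu : u ∈ VadmSet U B y₀ z_d T M r) :
    tauOf U B y₀ z_d T r u ∈ Ico (0 : ℝ) T ∧
      ‖stateT U B T (tauOf U B y₀ z_d T r u) u y₀ - z_d‖ ≤ r := by
  obtain ⟨τ₀, hτ₀, ⟨⟨humeas, c, hc⟩, -⟩, hdist⟩ := hu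
  set c' : ℝ := max c 0 with hc'
  have hc'' : ∀ᵐ t : ℝ ∂volume, t ∈ Ioo 0 T → ‖u t‖ ≤ c' :=
    hc.mono fun t h ht => (h ht).trans (le_max_left _ _)
  set S : Set ℝ := {τ | τ ∈ Ico (0 : ℝ) T ∧ ‖stateT U B T τ u y₀ - z_d‖ ≤ r} with hS
  set S' : Set ℝ := {τ ∈ Icc (0 : ℝ) T | ‖stateT U B T τ u y₀ - z_d‖ ≤ r} with hS'
  have hT0 : (0 : ℝ) ≤ T := hτ₀.1.trans hτ₀.2.le
  have hSS' : S = S' := by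
    ext τ
    constructor
    · rintro ⟨h1, h2⟩; exact ⟨⟨h1.1, h1.2.le⟩, h2⟩
    · rintro ⟨h1, h2⟩
      refine ⟨⟨h1.1, lt_of_le_of_ne h1.2 fun hEq => ?_⟩, h2⟩
      rw [hEq, stateT_self] at h2
      exact absurd h2 (not_le.2 hrT)
  -- continuity of the state on Icc 0 T
  set G : ℝ → H := fun τ => ∫ s in Ioo τ T, U (T - s) (B (u s)) with hG
  have hGlip : ∀ x ∈ Icc (0:ℝ) T, ∀ y ∈ Icc (0:ℝ) T, x ≤ y →
      ‖G x - G y‖ ≤ ‖B‖ * c' * (y - x) := by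
    intro x hx y hy hxy
    have hsub : ∀ᵐ t : ℝ ∂volume, t ∈ Ioo x T → ‖u t‖ ≤ c' :=
      hc''.mono fun t h ht => h (Set.Ioo_subset_Ioo hx.1 le_rfl ht)
    have hsplit := integral_Ioo_split (f := fun s => U (T - s) (B (u s))) hxy hy.2 (F_int hU humeas hsub)
    have : G x - G y = ∫ s in Ioo x y, U (T - s) (B (u s)) := by
      rw [hG]; simp only; rw [hsplit]; abel
    rw [this]
    exact F_norm hU hxy (hc''.mono fun t h ht => h (Set.Ioo_subset_Ioo hx.1 hy.2 ht))
  have hGcont : ContinuousOn G (Icc (0:ℝ) T) := by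
    refine LipschitzOnWith.continuousOn (K := (‖B‖ * c').toNNReal) ?_
    refine LipschitzOnWith.of_dist_le_mul fun x hx y hy => ?_
    rw [Real.coe_toNNReal _ (by positivity), dist_eq_norm, dist_eq_norm]
    rcases le_total x y with h | h
    · calc ‖G x - G y‖ ≤ ‖B‖ * c' * (y - x) := hGlip x hx y hy h
        _ ≤ ‖B‖ * c' * ‖x - y‖ := by
            refine mul_le_mul_of_nonneg_left ?_ (by positivity)
            rw [norm_sub_rev, Real.norm_eq_abs]; exact le_abs_self _
    · calc ‖G x - G y‖ = ‖G y - G x‖ := norm_sub_rev _ _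
        _ ≤ ‖B‖ * c' * (x - y) := hGlip y hy x hx h
        _ ≤ ‖B‖ * c' * ‖x - y‖ := by
            refine mul_le_mul_of_nonneg_left ?_ (by positivity)
            rw [Real.norm_eq_abs]; exact le_abs_self _
  have hhcont : ContinuousOn (fun τ => ‖stateT U B T τ u y₀ - z_d‖) (Icc (0:ℝ) T) := by
    have : ∀ τ, stateT U B T τ u y₀ = U T y₀ + G τ := fun τ => rfl
    simp only [this]
    exact ((continuousOn_const.add hGcont).sub continuousOn_const).norm
  have hS'closed : IsClosed S' := by
    have : S' = Icc (0:ℝ) T ∩ (fun τ => ‖stateT U B T τ u y₀ - z_d‖) ⁻¹' Iic r := by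
      ext τ; simp [hS', Set.mem_setOf_eq, Set.mem_inter_iff, and_comm]
    rw [this]
    exact hhcont.preimage_isClosed_of_isClosed isClosed_Icc isClosed_Iic
  have hS'cpt : IsCompact S' := isCompact_Icc.of_isClosed_subset hS'closed fun τ hτ => hτ.1
  have hS'ne : S'.Nonempty := ⟨τ₀, ⟨⟨hτ₀.1, hτ₀.2.le⟩, hdist⟩⟩
  have hmem : sSup S' ∈ S' := hS'cpt.sSup_mem hS'ne
  have hSmem : sSup S' ∈ S := by rw [hSS']; exact hmem
  have htau : tauOf U B y₀ z_d T r u = sSup S' := by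
    have h1 : tauOf U B y₀ z_d T r u = sSup S := rfl
    rw [h1, hSS']
  rw [htau]
  exact hSmem

end Aux

theorem tp_has_optimal_control
    (U : ℝ → H →L[ℂ] H) (B : H →L[ℂ] H) (hU : IsUnitaryGroup U) (hB : IsOrthProj B)
    (hEC : EC U B) (hECrev : EC (fun t => U (-t)) B)
    (T : ℝ) (hT : 0 < T) (y₀ z_d : H) (hrT : 0 < ‖U T y₀ - z_d‖)
    (M r : ℝ) (hr : r ∈ Ioo (0 : ℝ) ‖U T y₀ - z_d‖) (hM : MNP U B y₀ z_d T 0 r ≤ M) :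
    (VadmSet U B y₀ z_d T M r).Nonempty ∧
    (∀ u ∈ VadmSet U B y₀ z_d T M r,
      ‖stateT U B T (tauOf U B y₀ z_d T r u) u y₀ - z_d‖ ≤ r) ∧
    (∃ u : ℝ → H, IsOptTP U B y₀ z_d T M r u) ∧
    tauTP U B y₀ z_d T M r < T := by
  obtain ⟨hr0, hrlt⟩ := hr
  -- W_{0,r} is nonempty, via exact controllability
  obtain ⟨C, hC, hECT⟩ := hEC T hT
  obtain ⟨u₀, hu₀m, hu₀b, hu₀s⟩ := hECT y₀ z_d
  have hWne : (WadmSet U B y₀ z_d T 0 r).Nonempty := by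
    refine ⟨u₀, ⟨hu₀m, C * ‖z_d - U T y₀‖, hu₀b⟩, ?_⟩
    rw [hu₀s, sub_self, norm_zero]
    exact hr0.le
  have hSimg : ((fun u : ℝ → H => supNorm u 0 T) '' WadmSet U B y₀ z_d T 0 r).Nonempty :=
    hWne.image _
  have hMNP0 : 0 ≤ MNP U B y₀ z_d T 0 r :=
    Real.sInf_nonneg (by rintro x ⟨u, -, rfl⟩; exact supNorm_nonneg u 0 T)
  have hM0 : 0 ≤ M := hMNP0.trans hM
  -- a minimizing sequence for (NP)^{0,r}
  have hseq : ∀ n : ℕ, ∃ u ∈ WadmSet U B y₀ z_d T 0 r,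
      supNorm u 0 T < MNP U B y₀ z_d T 0 r + 1/(n+1) := by
    intro n
    obtain ⟨s, ⟨u, hu, rfl⟩, hlt⟩ :=
      Real.lt_sInf_add_pos hSimg (by positivity : (0:ℝ) < 1/(n+1))
    exact ⟨u, hu, hlt⟩
  choose un hunW hunlt using hseq
  have hunb : ∀ n, ∀ᵐ t : ℝ ∂volume, t ∈ Ioo 0 T → ‖un n t‖ ≤ M + 1/(n+1) := by
    intro n
    refine (ae_le_supNorm (hunW n).1).mono fun t h ht => (h ht).trans ?_
    have := (hunlt n).le
    linarith
  have hMn : Tendsto (fun n : ℕ => M + 1/((n:ℝ)+1)) atTop (𝓝 M) := by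
    have h0 := tendsto_one_div_add_atTop_nhds_zero_nat (𝕜 := ℝ)
    have := tendsto_const_nhds (x := M) (f := atTop (α := ℕ)) |>.add h0
    simpa using this
  obtain ⟨v₁, hv₁m, hv₁z, hv₁b, hv₁s⟩ :=
    key_limit hU hB hT y₀ z_d hM0 hr0.le un (fun n => (hunW n).1.1)
      _ hMn hunb (fun _ => r) tendsto_const_nhds (fun n => (hunW n).2)
  have hv₁V : v₁ ∈ VadmSet U B y₀ z_d T M r :=
    ⟨0, ⟨le_refl 0, hT⟩, ⟨⟨hv₁m, M, hv₁b⟩, hv₁b⟩, hv₁s⟩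
  -- helper facts about members of V
  have hVmeas : ∀ u ∈ VadmSet U B y₀ z_d T M r, AEStronglyMeasurable u (volume : Measure ℝ) := by
    rintro u ⟨τ₀, -, ⟨⟨hm, -⟩, -⟩, -⟩; exact hm
  have hMb' : ∀ u ∈ VadmSet U B y₀ z_d T M r,
      ∀ᵐ t : ℝ ∂volume, t ∈ Ioo (tauOf U B y₀ z_d T r u) T → ‖u t‖ ≤ M := by
    intro u hu
    obtain ⟨τ₀, hτ₀, ⟨hml, hMbd⟩, hd₀⟩ := hu
    have hτ₀le : τ₀ ≤ tauOf U B y₀ z_d T r u :=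
      le_csSup ⟨T, fun x hx => hx.1.2.le⟩ ⟨hτ₀, hd₀⟩
    exact hMbd.mono fun t h ht => h (Set.Ioo_subset_Ioo_left hτ₀le ht)
  have hkey : ∀ u ∈ VadmSet U B y₀ z_d T M r,
      ‖U T y₀ - z_d‖ ≤ r + ‖B‖ * M * (T - tauOf U B y₀ z_d T r u) := by
    intro u hu
    obtain ⟨hIco, hdist⟩ := tau_attained hU hrlt hu
    have hnorm := F_norm (B := B) (T := T) hU hIco.2.le (hMb' u hu)
    have e1 : U T y₀ - z_d = (stateT U B T (tauOf U B y₀ z_d T r u) u y₀ - z_d) -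
        ∫ s in Ioo (tauOf U B y₀ z_d T r u) T, U (T - s) (B (u s)) := by
      unfold stateT; abel
    calc ‖U T y₀ - z_d‖
        ≤ ‖stateT U B T (tauOf U B y₀ z_d T r u) u y₀ - z_d‖ +
          ‖∫ s in Ioo (tauOf U B y₀ z_d T r u) T, U (T - s) (B (u s))‖ := by
          rw [e1]; exact norm_sub_le _ _
      _ ≤ r + ‖B‖ * M * (T - tauOf U B y₀ z_d T r u) := add_le_add hdist hnorm
  have hBMpos : 0 < ‖B‖ * M := by
    by_contra hle
    push_neg at hle
    have h1 := hkey v₁ hv₁V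
    have hτ := (tau_attained hU hrlt hv₁V).1
    have h2 : ‖B‖ * M * (T - tauOf U B y₀ z_d T r v₁) ≤ 0 :=
      mul_nonpos_of_nonpos_of_nonneg hle (by linarith [hτ.2.le, hτ.1])
    linarith
  set A : Set ℝ := tauOf U B y₀ z_d T r '' VadmSet U B y₀ z_d T M r with hA
  have hAne : A.Nonempty := ⟨_, Set.mem_image_of_mem _ hv₁V⟩
  set ρ : ℝ := (‖U T y₀ - z_d‖ - r)/(‖B‖ * M) with hρ
  have hρpos : 0 < ρ := div_pos (by linarith) hBMpos
  have hAub : ∀ x ∈ A, x ≤ T - ρ := by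
    rintro x ⟨u, hu, rfl⟩
    have h1 := hkey u hu
    have h2 : ρ ≤ T - tauOf U B y₀ z_d T r u := by
      rw [hρ, div_le_iff₀ hBMpos]
      nlinarith
    linarith
  have hAbdd : BddAbove A := ⟨T - ρ, hAub⟩
  have hx0 : tauOf U B y₀ z_d T r v₁ ∈ A := Set.mem_image_of_mem _ hv₁V
  have h0x : 0 ≤ tauOf U B y₀ z_d T r v₁ := (tau_attained hU hrlt hv₁V).1.1
  have hTρ : 0 ≤ T - ρ := h0x.trans (hAub _ hx0)
  have hsup : sSup A ≤ T - ρ := Real.sSup_le hAub hTρ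
  have htauTPeq : tauTP U B y₀ z_d T M r = sSup A := rfl
  have hlast : tauTP U B y₀ z_d T M r < T := by rw [htauTPeq]; linarith
  -- existence of an optimal control
  set τs : ℝ := sSup A with hτs
  have hτs0 : 0 ≤ τs := h0x.trans (le_csSup hAbdd hx0)
  have hτsT : τs < T := by rw [hτs]; linarith
  obtain ⟨xs, -, hxst, hxsm⟩ := exists_seq_tendsto_sSup hAne hAbdd
  have hxsel : ∀ n, ∃ u ∈ VadmSet U B y₀ z_d T M r, tauOf U B y₀ z_d T r u = xs n :=
    fun n => (Set.mem_image _ _ _).1 (hxsm n)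
  choose wn hwnV hwne using hxsel
  have hxsle : ∀ n, xs n ≤ τs := fun n => le_csSup hAbdd (hxsm n)
  have hwnb : ∀ n, ∀ᵐ t : ℝ ∂volume, t ∈ Ioo (xs n) T → ‖wn n t‖ ≤ M := by
    intro n
    have := hMb' (wn n) (hwnV n)
    rwa [hwne n] at this
  have hstn : ∀ n, ‖stateT U B T τs (wn n) y₀ - z_d‖ ≤ r + ‖B‖ * M * (τs - xs n) := by
    intro n
    have hdist : ‖stateT U B T (xs n) (wn n) y₀ - z_d‖ ≤ r := by
      have := (tau_attained hU hrlt (hwnV n)).2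
      rwa [hwne n] at this
    have hdiff := stateT_diff (B := B) hU y₀ (hVmeas (wn n) (hwnV n)) (hxsle n) hτsT.le (hwnb n)
    have hnorm : ‖∫ s in Ioo (xs n) τs, U (T - s) (B (wn n s))‖ ≤ ‖B‖ * M * (τs - xs n) :=
      F_norm hU (hxsle n)
        ((hwnb n).mono fun t h ht => h (Set.Ioo_subset_Ioo le_rfl hτsT.le ht))
    have e : stateT U B T τs (wn n) y₀ - z_d = (stateT U B T (xs n) (wn n) y₀ - z_d) -
        ∫ s in Ioo (xs n) τs, U (T - s) (B (wn n s)) := by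
      rw [← hdiff]; abel
    rw [e]
    exact (norm_sub_le _ _).trans (add_le_add hdist hnorm)
  have hrn : Tendsto (fun n => r + ‖B‖ * M * (τs - xs n)) atTop (𝓝 r) := by
    have h1 : Tendsto (fun n => τs - xs n) atTop (𝓝 (τs - τs)) := tendsto_const_nhds.sub hxst
    have h2 := (h1.const_mul (‖B‖ * M)).const_add r
    simpa using h2
  obtain ⟨v₂, hv₂m, hv₂z, hv₂b, hv₂s⟩ :=
    key_limit hU hB hτsT y₀ z_d hM0 hr0.le wn (fun n => hVmeas (wn n) (hwnV n))
      (fun _ => M) tendsto_const_nhds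
      (fun n => (hwnb n).mono fun t h ht => h (Set.Ioo_subset_Ioo_left (hxsle n) ht))
      _ hrn hstn
  have hv₂b0 : ∀ᵐ t : ℝ ∂volume, t ∈ Ioo 0 T → ‖v₂ t‖ ≤ M := by
    filter_upwards [hv₂b] with t h ht
    by_cases hmem : t ∈ Ioo τs T
    · exact h hmem
    · rw [hv₂z t hmem, norm_zero]; exact hM0
  have hv₂V : v₂ ∈ VadmSet U B y₀ z_d T M r :=
    ⟨τs, ⟨hτs0, hτsT⟩, ⟨⟨hv₂m, M, hv₂b0⟩, hv₂b⟩, hv₂s⟩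
  refine ⟨⟨v₁, hv₁V⟩, fun u hu => (tau_attained hU hrlt hu).2, ⟨v₂, hv₂V, ?_⟩, hlast⟩
  exact hv₂s
end
end

section
/- Assume hypotheses (EC) and (UC). Let r ∈ (0,r_T) and M ≥ M(0,r). Then M < M^{τ(M,r)}. -/
open MeasureTheory Set Filter Topology

noncomputable section

variable {H : Type*} [NormedAddCommGroup H] [InnerProductSpace ℂ H] [CompleteSpace H]
  [SecondCountableTopology H]

section AuxLemmas
set_option linter.unusedSectionVars false
set_option linter.unusedVariables false

lemma IsOrthProj.norm_le {B : H →L[ℂ] H} (hB : IsOrthProj B) (x : H) : ‖B x‖ ≤ ‖x‖ := by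
  obtain ⟨-, hBB, hsa⟩ := hB
  have hBBx : B (B x) = B x := by
    have := congrArg (fun f : H →L[ℂ] H => f x) hBB
    simpa using this
  have h1 : (inner ℂ (B x) (B x) : ℂ) = inner ℂ x (B x) := by
    rw [hsa x (B x), hBBx]
  have h2 : ‖B x‖ ^ 2 = RCLike.re (inner ℂ x (B x) : ℂ) := by
    rw [← h1]; exact (inner_self_eq_norm_sq _).symm
  have h3 : RCLike.re (inner ℂ x (B x) : ℂ) ≤ ‖(inner ℂ x (B x) : ℂ)‖ := RCLike.re_le_norm _
  have h4 : ‖(inner ℂ x (B x) : ℂ)‖ ≤ ‖x‖ * ‖B x‖ := norm_inner_le_norm x (B x)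
  rcases eq_or_lt_of_le (norm_nonneg (B x)) with h | h
  · rw [← h]; exact norm_nonneg x
  · nlinarith [h2, h3, h4]

lemma IsUnitaryGroup.jointCont {U : ℝ → H →L[ℂ] H} (hU : IsUnitaryGroup U) :
    Continuous fun p : ℝ × H => U p.1 p.2 := by
  obtain ⟨-, -, hiso, hcont⟩ := hU
  rw [continuous_iff_continuousAt]
  rintro ⟨t₀, x₀⟩
  rw [ContinuousAt, tendsto_iff_norm_sub_tendsto_zero]
  have key : ∀ p : ℝ × H, ‖U p.1 p.2 - U t₀ x₀‖ ≤ ‖p.2 - x₀‖ + ‖U p.1 x₀ - U t₀ x₀‖ := by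
    intro p
    calc ‖U p.1 p.2 - U t₀ x₀‖ ≤ ‖U p.1 p.2 - U p.1 x₀‖ + ‖U p.1 x₀ - U t₀ x₀‖ :=
          norm_sub_le_norm_sub_add_norm_sub _ _ _
      _ = ‖p.2 - x₀‖ + ‖U p.1 x₀ - U t₀ x₀‖ := by
          rw [← map_sub, hiso]
  have hg : Tendsto (fun p : ℝ × H => ‖p.2 - x₀‖ + ‖U p.1 x₀ - U t₀ x₀‖)
      (𝓝 (t₀, x₀)) (𝓝 0) := by
    have hc : Continuous fun p : ℝ × H => ‖p.2 - x₀‖ + ‖U p.1 x₀ - U t₀ x₀‖ :=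
      (continuous_snd.sub continuous_const).norm.add
        (((hcont x₀).comp continuous_fst).sub continuous_const).norm
    have := hc.tendsto (t₀, x₀)
    simpa using this
  exact squeeze_zero (fun p => norm_nonneg _) key hg

lemma integrand_aesm {U : ℝ → H →L[ℂ] H} (hU : IsUnitaryGroup U) (B : H →L[ℂ] H)
    {v : ℝ → H} (hv : AEStronglyMeasurable v (volume : Measure ℝ)) (T : ℝ) :
    AEStronglyMeasurable (fun s : ℝ => U (T - s) (B (v s))) (volume : Measure ℝ) := by
  have h1 : AEStronglyMeasurable (fun s : ℝ => ((T - s : ℝ), B (v s))) (volume : Measure ℝ) :=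
    (continuous_const.sub continuous_id).aestronglyMeasurable.prodMk
      (B.continuous.comp_aestronglyMeasurable hv)
  exact hU.jointCont.comp_aestronglyMeasurable h1

lemma norm_int_le {U : ℝ → H →L[ℂ] H} (hU : IsUnitaryGroup U) {B : H →L[ℂ] H}
    (hB : IsOrthProj B) {v : ℝ → H} {a b c T : ℝ} (hab : a ≤ b) (hc : 0 ≤ c)
    (hbd : ∀ᵐ t : ℝ ∂volume, t ∈ Ioo a b → ‖v t‖ ≤ c) :
    ‖∫ s in Ioo a b, U (T - s) (B (v s))‖ ≤ c * (b - a) := by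
  have hvol : volume (Ioo a b) < ⊤ := by
    rw [Real.volume_Ioo]; exact ENNReal.ofReal_lt_top
  have hbd' : ∀ᵐ t : ℝ ∂volume, t ∈ Ioo a b → ‖U (T - t) (B (v t))‖ ≤ c := by
    filter_upwards [hbd] with t ht hmem
    rw [hU.2.2.1]
    exact (hB.norm_le (v t)).trans (ht hmem)
  have := norm_setIntegral_le_of_norm_le_const_ae' (μ := volume) hvol hbd'
  rwa [Measure.real, Real.volume_Ioo, ENNReal.toReal_ofReal (by linarith)] at this

lemma norm_stateT_sub {U : ℝ → H →L[ℂ] H} (hU : IsUnitaryGroup U) {B : H →L[ℂ] H}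
    (hB : IsOrthProj B) {v : ℝ → H} {a c T : ℝ} (y₀ : H) (hab : a ≤ T) (hc : 0 ≤ c)
    (hbd : ∀ᵐ t : ℝ ∂volume, t ∈ Ioo a T → ‖v t‖ ≤ c) :
    ‖stateT U B T a v y₀ - U T y₀‖ ≤ c * (T - a) := by
  rw [stateT, add_sub_cancel_left]
  exact norm_int_le hU hB hab hc hbd

lemma int_on {U : ℝ → H →L[ℂ] H} (hU : IsUnitaryGroup U) {B : H →L[ℂ] H}
    (hB : IsOrthProj B) {v : ℝ → H} (hv : AEStronglyMeasurable v (volume : Measure ℝ))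
    {a b c T : ℝ} (hbd : ∀ᵐ t : ℝ ∂volume, t ∈ Ioo a b → ‖v t‖ ≤ c) :
    IntegrableOn (fun s : ℝ => U (T - s) (B (v s))) (Ioo a b) volume := by
  apply Measure.integrableOn_of_bounded (M := c)
  · rw [Real.volume_Ioo]; exact ENNReal.ofReal_ne_top
  · exact integrand_aesm hU B hv T
  · rw [ae_restrict_iff' measurableSet_Ioo]
    filter_upwards [hbd] with t ht hmem
    rw [hU.2.2.1]
    exact (hB.norm_le (v t)).trans (ht hmem)

lemma int_split {g : ℝ → H} {a b c : ℝ} (hab : a ≤ b) (hbc : b ≤ c)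
    (hint : IntegrableOn g (Ioo a c) volume) :
    ∫ s in Ioo a c, g s = (∫ s in Ioo a b, g s) + ∫ s in Ioo b c, g s := by
  have hint' : IntegrableOn g (Ioc a c) volume := by
    rwa [IntegrableOn, Measure.restrict_congr_set Ioo_ae_eq_Ioc.symm]
  rw [setIntegral_congr_set Ioo_ae_eq_Ioc, setIntegral_congr_set Ioo_ae_eq_Ioc,
    setIntegral_congr_set Ioo_ae_eq_Ioc, ← Ioc_union_Ioc_eq_Ioc hab hbc,
    setIntegral_union (Ioc_disjoint_Ioc_of_le le_rfl) measurableSet_Ioc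
      (hint'.mono_set (Ioc_subset_Ioc le_rfl hbc))
      (hint'.mono_set (Ioc_subset_Ioc hab le_rfl))]

lemma int_translate (g : ℝ → H) (a b τ : ℝ) :
    ∫ s in Ioo a b, g (s - τ) = ∫ s in Ioo (a - τ) (b - τ), g s := by
  rw [← integral_indicator measurableSet_Ioo, ← integral_indicator measurableSet_Ioo]
  have heq : ∀ s : ℝ, (Ioo a b).indicator (fun s => g (s - τ)) s
      = (Ioo (a - τ) (b - τ)).indicator g (s - τ) := by
    intro s
    by_cases h : s ∈ Ioo a b
    · have hm : s - τ ∈ Ioo (a - τ) (b - τ) := ⟨by linarith [h.1], by linarith [h.2]⟩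
      rw [indicator_of_mem h, indicator_of_mem hm]
    · rw [indicator_of_notMem h, indicator_of_notMem]
      intro hmem
      exact h ⟨by linarith [hmem.1], by linarith [hmem.2]⟩
  simp_rw [heq]
  exact integral_sub_right_eq_self ((Ioo (a - τ) (b - τ)).indicator g) τ

end AuxLemmas

set_option maxHeartbeats 1000000 in
theorem lt_Mtau_of_tauTP
    (U : ℝ → H →L[ℂ] H) (B : H →L[ℂ] H) (hU : IsUnitaryGroup U) (hB : IsOrthProj B)
    (hEC : EC U B) (hECrev : EC (fun t => U (-t)) B)
    (hUC : UC U B)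
    (T : ℝ) (hT : 0 < T) (y₀ z_d : H) (hrT : 0 < ‖U T y₀ - z_d‖)
    (M r : ℝ) (hr : r ∈ Ioo (0 : ℝ) ‖U T y₀ - z_d‖) (hM : MNP U B y₀ z_d T 0 r ≤ M) :
    M < Mtau U B y₀ z_d T (tauTP U B y₀ z_d T M r) := by
  obtain ⟨hr0, hrlt⟩ := hr
  set rT : ℝ := ‖U T y₀ - z_d‖ with hrTdef
  -- Step 1 : lower bound for MNP, hence M > 0
  have hWne : ((fun u : ℝ → H => supNorm u 0 T) '' WadmSet U B y₀ z_d T 0 r).Nonempty := by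
    obtain ⟨C, hC, hex⟩ := hEC T hT
    obtain ⟨u, hum, hub, hust⟩ := hex y₀ z_d
    exact ⟨supNorm u 0 T, ⟨u, ⟨⟨hum, ⟨C * ‖z_d - U T y₀‖, hub⟩⟩,
      by rw [hust]; simpa using hr0.le⟩, rfl⟩⟩
  have hMNPlb : (rT - r) / T ≤ MNP U B y₀ z_d T 0 r := by
    apply le_csInf hWne
    rintro x ⟨u, ⟨⟨hum, c₀, hc₀⟩, hdist⟩, rfl⟩
    apply le_csInf
    · refine ⟨max c₀ 0, le_max_right _ _, ?_⟩
      filter_upwards [hc₀] with t ht hmem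
      exact (ht hmem).trans (le_max_left _ _)
    · rintro c ⟨hc0, hcb⟩
      have h1 : ‖stateT U B T 0 u y₀ - U T y₀‖ ≤ c * (T - 0) :=
        norm_stateT_sub hU hB y₀ hT.le hc0 hcb
      have h3 := norm_sub_le_norm_sub_add_norm_sub (U T y₀) (stateT U B T 0 u y₀) z_d
      rw [norm_sub_rev (U T y₀) (stateT U B T 0 u y₀), ← hrTdef] at h3
      rw [div_le_iff₀ hT]
      have h4 : c * (T - 0) = c * T := by ring
      rw [h4] at h1
      nlinarith [h1, h3, hdist]
  have hM0 : 0 < M :=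
    lt_of_lt_of_le (div_pos (by linarith) hT) (le_trans hMNPlb hM)
  have hMlb : (rT - r) / T ≤ M := hMNPlb.trans hM
  set η : ℝ := (rT - r) / M with hηdef
  have hη0 : 0 < η := div_pos (by linarith) hM0
  have hηT : η ≤ T := by
    rw [hηdef, div_le_iff₀ hM0]
    rw [div_le_iff₀ hT] at hMlb
    nlinarith [hMlb]
  -- Step 2 : every admissible switching time is at most T - η
  have hkey : ∀ u ∈ VadmSet U B y₀ z_d T M r, tauOf U B y₀ z_d T r u ≤ T - η := by
    rintro u ⟨τ₀, ⟨hτ₀0, hτ₀T⟩, ⟨humem, hubd⟩, hudist⟩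
    have hgen : ∀ τ : ℝ, τ₀ ≤ τ → τ ≤ T → ‖stateT U B T τ u y₀ - z_d‖ ≤ r → τ ≤ T - η := by
      intro τ hτ₀τ hτT hdist
      have hbd' : ∀ᵐ t : ℝ ∂volume, t ∈ Ioo τ T → ‖u t‖ ≤ M := by
        filter_upwards [hubd] with t ht hmem
        exact ht ⟨lt_of_le_of_lt hτ₀τ hmem.1, hmem.2⟩
      have h1 := norm_stateT_sub hU hB y₀ hτT hM0.le hbd'
      have h3 := norm_sub_le_norm_sub_add_norm_sub (U T y₀) (stateT U B T τ u y₀) z_d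
      rw [norm_sub_rev (U T y₀) (stateT U B T τ u y₀), ← hrTdef] at h3
      have h4 : η ≤ T - τ := by
        rw [hηdef, div_le_iff₀ hM0]
        nlinarith [h1, h3, hdist]
      linarith
    apply Real.sSup_le
    · rintro τ ⟨⟨hτ0, hτT⟩, hdist⟩
      rcases le_or_gt τ τ₀ with hle | hlt
      · exact hle.trans (hgen τ₀ le_rfl hτ₀T.le hudist)
      · exact hgen τ hlt.le hτT.le hdist
    · linarith
  have hτub : tauTP U B y₀ z_d T M r ≤ T - η := by
    apply Real.sSup_le
    · rintro x ⟨u, hu, rfl⟩; exact hkey u hu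
    · linarith
  have hτlb : 0 ≤ tauTP U B y₀ z_d T M r := by
    apply Real.sSup_nonneg
    rintro x ⟨u, hu, rfl⟩
    apply Real.sSup_nonneg
    rintro τ ⟨⟨hτ0, -⟩, -⟩
    exact hτ0
  set τs : ℝ := tauTP U B y₀ z_d T M r with hτsdef
  have hτsT : τs < T := lt_of_le_of_lt hτub (by linarith)
  -- Step 3 : the exact steering set over (τs, T) is nonempty
  obtain ⟨C, hC, hex⟩ := hEC (T - τs) (by linarith)
  obtain ⟨v₀, hv₀m, hv₀b, hv₀s⟩ := hex (U τs y₀) z_d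
  set K : ℝ := C * ‖z_d - U (T - τs) (U τs y₀)‖ with hKdef
  set u₀ : ℝ → H := (Ioi τs).indicator (fun t => v₀ (t - τs)) with hu₀def
  have hmp : MeasurePreserving (fun t : ℝ => t - τs) volume volume :=
    measurePreserving_sub_right volume τs
  have hcomp : AEStronglyMeasurable (fun t : ℝ => v₀ (t - τs)) (volume : Measure ℝ) :=
    hv₀m.comp_quasiMeasurePreserving hmp.quasiMeasurePreserving
  have hu₀m : AEStronglyMeasurable u₀ (volume : Measure ℝ) :=
    hcomp.indicator measurableSet_Ioi
  have hu₀b : ∀ᵐ t : ℝ ∂volume, t ∈ Ioo 0 T → ‖u₀ t‖ ≤ max K 0 := by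
    have hpull : ∀ᵐ t : ℝ ∂volume, (t - τs) ∈ Ioo 0 (T - τs) → ‖v₀ (t - τs)‖ ≤ K :=
      hmp.quasiMeasurePreserving.tendsto_ae.eventually hv₀b
    filter_upwards [hpull] with t ht hmem
    rw [hu₀def]
    by_cases hti : t ∈ Ioi τs
    · rw [indicator_of_mem hti]
      refine (ht ⟨?_, ?_⟩).trans (le_max_left _ _)
      · simpa using hti
      · have := hmem.2; linarith
    · rw [indicator_of_notMem hti]
      simp [le_max_right]
  have hstate₀ : stateT U B T τs u₀ y₀ = z_d := by
    have hint1 : ∫ s in Ioo τs T, U (T - s) (B (u₀ s))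
        = ∫ s in Ioo τs T, U ((T - τs) - (s - τs)) (B (v₀ (s - τs))) := by
      apply setIntegral_congr_fun measurableSet_Ioo
      intro s hs
      show U (T - s) (B (u₀ s)) = U ((T - τs) - (s - τs)) (B (v₀ (s - τs)))
      rw [hu₀def, indicator_of_mem (mem_Ioi.2 hs.1), sub_sub_sub_cancel_right]
    have hint2 : ∫ s in Ioo τs T, U ((T - τs) - (s - τs)) (B (v₀ (s - τs)))
        = ∫ σ in Ioo 0 (T - τs), U ((T - τs) - σ) (B (v₀ σ)) := by
      have := int_translate (fun σ : ℝ => U ((T - τs) - σ) (B (v₀ σ))) τs T τs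
      simpa [sub_self] using this
    have hgroup : U (T - τs) (U τs y₀) = U T y₀ := by
      have h := hU.2.1 (T - τs) τs
      rw [sub_add_cancel] at h
      rw [h]; rfl
    rw [stateT, hint1, hint2, ← hgroup]
    rw [stateT] at hv₀s
    exact hv₀s
  have hSne : {u : ℝ → H | MemLinfty u 0 T ∧ stateT U B T τs u y₀ = z_d}.Nonempty :=
    ⟨u₀, ⟨hu₀m, ⟨max K 0, hu₀b⟩⟩, hstate₀⟩
  -- Step 4 : contradiction argument
  by_contra hcon
  push_neg at hcon
  set ε : ℝ := r * M / (2 * rT) with hεdef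
  have hε0 : 0 < ε := div_pos (mul_pos hr0 hM0) (by linarith)
  have himne : ((fun u : ℝ → H => supNorm u τs T) ''
      {u : ℝ → H | MemLinfty u 0 T ∧ stateT U B T τs u y₀ = z_d}).Nonempty := hSne.image _
  have hbdd : BddBelow ((fun u : ℝ → H => supNorm u τs T) ''
      {u : ℝ → H | MemLinfty u 0 T ∧ stateT U B T τs u y₀ = z_d}) := by
    refine ⟨0, ?_⟩
    rintro x ⟨u, -, rfl⟩
    exact Real.sInf_nonneg fun c hc => hc.1
  have hlt : Mtau U B y₀ z_d T τs < M + ε := lt_of_le_of_lt hcon (by linarith)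
  rw [Mtau] at hlt
  obtain ⟨x, ⟨v, ⟨hvml, hvst⟩, rfl⟩, hxlt⟩ := (csInf_lt_iff hbdd himne).1 hlt
  simp only [supNorm] at hxlt
  have hAne : {c : ℝ | 0 ≤ c ∧ ∀ᵐ t : ℝ ∂volume, t ∈ Ioo τs T → ‖v t‖ ≤ c}.Nonempty := by
    obtain ⟨c₀, hc₀⟩ := hvml.2
    refine ⟨max c₀ 0, le_max_right _ _, ?_⟩
    filter_upwards [hc₀] with t ht hmem
    exact (ht ⟨lt_of_le_of_lt hτlb hmem.1, hmem.2⟩).trans (le_max_left _ _)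
  obtain ⟨c, ⟨hc0, hcb⟩, hclt⟩ := (csInf_lt_iff ⟨0, fun x hx => hx.1⟩ hAne).1 hxlt
  set lam : ℝ := M / (M + ε) with hlamdef
  have hMε0 : 0 < M + ε := by linarith
  have hlam0 : 0 < lam := div_pos hM0 hMε0
  have hlam1 : lam ≤ 1 := by
    rw [hlamdef, div_le_one hMε0]; linarith
  have hnl : ∀ x : H, ‖(lam : ℂ) • x‖ = lam * ‖x‖ := fun x => by
    rw [norm_smul, Complex.norm_real, Real.norm_eq_abs, abs_of_nonneg hlam0.le]
  set δ : ℝ := min (η / 2) (r / (2 * (M + ε))) with hδdef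
  have hδ0 : 0 < δ := lt_min (by linarith) (div_pos (by linarith) (by linarith))
  have hδη : δ ≤ η / 2 := min_le_left _ _
  have hδr : δ ≤ r / (2 * (M + ε)) := min_le_right _ _
  set b : ℝ := τs + δ with hbdef
  have hbT : b < T := by
    rw [hbdef]
    have : τs ≤ T - η := hτub
    linarith
  have hb0 : 0 ≤ b := by rw [hbdef]; linarith
  have hτsb : τs ≤ b := by rw [hbdef]; linarith
  set w : ℝ → H := fun t => (lam : ℂ) • v t with hwdef
  have hgint : IntegrableOn (fun s : ℝ => U (T - s) (B (v s))) (Ioo τs T) volume :=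
    int_on hU hB hvml.1 hcb
  have hIfull : (∫ s in Ioo τs T, U (T - s) (B (v s))) = z_d - U T y₀ := by
    rw [stateT] at hvst
    rw [eq_sub_iff_add_eq, add_comm]
    exact hvst
  have hsplit := int_split hτsb hbT.le hgint
  have hI1 : ‖∫ s in Ioo τs b, U (T - s) (B (v s))‖ ≤ c * δ := by
    have hbd' : ∀ᵐ t : ℝ ∂volume, t ∈ Ioo τs b → ‖v t‖ ≤ c := by
      filter_upwards [hcb] with t ht hmem
      exact ht ⟨hmem.1, lt_of_lt_of_le hmem.2 hbT.le⟩
    have h := norm_int_le (T := T) hU hB hτsb hc0 hbd'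
    have hb' : b - τs = δ := by rw [hbdef]; ring
    rwa [hb'] at h
  have hstw : stateT U B T b w y₀ - z_d
      = ((1 : ℂ) - (lam : ℂ)) • (U T y₀ - z_d)
        - (lam : ℂ) • ∫ s in Ioo τs b, U (T - s) (B (v s)) := by
    have h1 : (∫ s in Ioo b T, U (T - s) (B (w s)))
        = (lam : ℂ) • ∫ s in Ioo b T, U (T - s) (B (v s)) := by
      rw [← integral_smul]
      apply setIntegral_congr_fun measurableSet_Ioo
      intro s hs
      show U (T - s) (B ((lam : ℂ) • v s)) = (lam : ℂ) • U (T - s) (B (v s))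
      rw [_root_.map_smul, _root_.map_smul]
    have h2 : (∫ s in Ioo b T, U (T - s) (B (v s)))
        = (z_d - U T y₀) - ∫ s in Ioo τs b, U (T - s) (B (v s)) := by
      rw [← hIfull, hsplit]; abel
    rw [stateT, h1, h2]
    simp only [smul_sub, sub_smul, one_smul]
    abel
  have hnorm : ‖stateT U B T b w y₀ - z_d‖ ≤ r := by
    rw [hstw]
    have e1 : ‖((1 : ℂ) - (lam : ℂ)) • (U T y₀ - z_d)‖ = (1 - lam) * rT := by
      rw [norm_smul, ← Complex.ofReal_one, ← Complex.ofReal_sub, Complex.norm_real,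
        Real.norm_eq_abs, abs_of_nonneg (by linarith)]
    have e2 : ‖(lam : ℂ) • ∫ s in Ioo τs b, U (T - s) (B (v s))‖ ≤ lam * (c * δ) := by
      rw [hnl]
      exact mul_le_mul_of_nonneg_left hI1 hlam0.le
    have h1m : 1 - lam = ε / (M + ε) := by
      rw [hlamdef]; field_simp; ring
    have hεrT : ε * rT = r * M / 2 := by
      rw [hεdef]; field_simp
    have hhalf1 : (1 - lam) * rT ≤ r / 2 := by
      rw [h1m, div_mul_eq_mul_div, div_le_iff₀ hMε0, hεrT]
      nlinarith [mul_pos hr0 hε0]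
    have hhalf2 : lam * (c * δ) ≤ r / 2 := by
      have hcd : c * δ ≤ r / 2 := by
        have h := mul_le_mul hclt.le hδr hδ0.le hMε0.le
        have : (M + ε) * (r / (2 * (M + ε))) = r / 2 := by field_simp
        nlinarith [h, this]
      nlinarith [hcd, hlam0.le, hlam1, mul_nonneg hc0 hδ0.le]
    calc ‖((1 : ℂ) - (lam : ℂ)) • (U T y₀ - z_d)
          - (lam : ℂ) • ∫ s in Ioo τs b, U (T - s) (B (v s))‖
        ≤ ‖((1 : ℂ) - (lam : ℂ)) • (U T y₀ - z_d)‖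
          + ‖(lam : ℂ) • ∫ s in Ioo τs b, U (T - s) (B (v s))‖ := norm_sub_le _ _
      _ ≤ (1 - lam) * rT + lam * (c * δ) := by rw [e1]; linarith [e2]
      _ ≤ r := by linarith
  have hwml : MemLinfty w 0 T := by
    refine ⟨hvml.1.const_smul (lam : ℂ), ?_⟩
    obtain ⟨c₀, hc₀⟩ := hvml.2
    refine ⟨c₀, ?_⟩
    filter_upwards [hc₀] with t ht hmem
    have := ht hmem
    rw [hwdef]
    show ‖(lam : ℂ) • v t‖ ≤ c₀
    rw [hnl]
    nlinarith [norm_nonneg (v t)]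
  have hwbd : ∀ᵐ t : ℝ ∂volume, t ∈ Ioo b T → ‖w t‖ ≤ M := by
    filter_upwards [hcb] with t ht hmem
    have hv := ht ⟨lt_of_le_of_lt hτsb hmem.1, hmem.2⟩
    rw [hwdef]
    show ‖(lam : ℂ) • v t‖ ≤ M
    rw [hnl]
    have hlamMε : lam * (M + ε) = M := by
      rw [hlamdef]; field_simp
    nlinarith [mul_le_mul_of_nonneg_left hv hlam0.le,
      mul_le_mul_of_nonneg_left hclt.le hlam0.le]
  have hwV : w ∈ VadmSet U B y₀ z_d T M r := ⟨b, ⟨hb0, hbT⟩, ⟨hwml, hwbd⟩, hnorm⟩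
  have htauOfw : b ≤ tauOf U B y₀ z_d T r w := by
    apply le_csSup
    · refine ⟨T, ?_⟩
      rintro x ⟨⟨-, hxT⟩, -⟩
      exact hxT.le
    · exact ⟨⟨hb0, hbT⟩, hnorm⟩
  have hfinal : tauOf U B y₀ z_d T r w ≤ τs := by
    rw [hτsdef, tauTP]
    apply le_csSup
    · refine ⟨T - η, ?_⟩
      rintro x ⟨u, hu, rfl⟩
      exact hkey u hu
    · exact mem_image_of_mem _ hwV
  rw [hbdef] at htauOfw
  linarith
end
end
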